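/- arXiv:1510.01596 — 2 statements merged into one kernel-verified Lean document; each statement's English description precedes it below -/
import Mathlib

section
/- Let n ≥ 1 and s ∈ (0,1). (i) For every R > 0 and every x ∈ ℝ^n with |x| < R, one has ∫_{{y ∈ ℝ^n : |y| ≥ R}} |x−y|^{−n−2s} dy ≤ (σ_{n−1}/(2s)) (R−|x|)^{−2s}, where σ_{n−1} is the surface measure of the unit sphere S^{n−1}. (ii) Consequently, there is a constant C depending only on n such that for every R ≥ 2, ∫_{B_{R−1}} ∫_{{|y| ≥ R}} |x−y|^{−n−2s} dy dx ≤ (C/s) Φ_{n,s}(R), where B_{R-1} = {x ∈ ℝ^n : |x| < R-1}. -/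
open MeasureTheory Filter Set

/-- The function `Φ_{n,s}(R)`. -/
noncomputable def Phi (n : ℕ) (s R : ℝ) : ℝ :=
  if s = 1 / 2 then R ^ ((n : ℝ) - 1) * Real.log R
  else R ^ ((n : ℝ) - 1) * (R ^ (1 - 2 * s) - 1) / (1 - 2 * s)

/-- The surface measure `σ_{n-1}` of the unit sphere `S^{n-1} ⊂ ℝ^n`, namely `n·ω_n` where
`ω_n` is the volume of the unit ball. -/
noncomputable def sphereArea (n : ℕ) : ℝ :=
  (n : ℝ) * (volume (Metric.ball (0 : EuclideanSpace ℝ (Fin n)) 1)).toReal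

lemma aux_integrableOn_compl (n : ℕ) (hn : 1 ≤ n) {p r : ℝ} (hp : (n : ℝ) < p) (hr : 0 < r) :
    IntegrableOn (fun y : EuclideanSpace ℝ (Fin n) => ‖y‖ ^ (-p)) (Metric.ball 0 r)ᶜ := by
  have hp0 : 0 < p := lt_of_le_of_lt (by positivity) hp
  have hJ : Integrable (fun y : EuclideanSpace ℝ (Fin n) => (1 + 1/r) ^ p * (1 + ‖y‖) ^ (-p)) :=
    (integrable_one_add_norm (by simpa using hp)).const_mul _
  refine (hJ.integrableOn).mono' ?_ ?_
  · exact (measurable_norm.pow_const _).aestronglyMeasurable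
  · rw [ae_restrict_iff' measurableSet_ball.compl]
    filter_upwards with y hy
    simp only [mem_compl_iff, Metric.mem_ball, dist_zero_right, not_lt] at hy
    have hy0 : 0 < ‖y‖ := lt_of_lt_of_le hr hy
    have h1 : (1 + ‖y‖) / (1 + 1/r) ≤ ‖y‖ := by
      rw [div_le_iff₀ (by positivity)]
      have h3 : 1 ≤ ‖y‖ * (1/r) := by rw [mul_one_div]; exact (one_le_div hr).2 hy
      nlinarith [h3]
    have h2 : ‖y‖ ^ (-p) ≤ ((1 + ‖y‖) / (1 + 1/r)) ^ (-p) :=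
      Real.rpow_le_rpow_of_nonpos (by positivity) h1 (by linarith)
    rw [Real.norm_of_nonneg (Real.rpow_nonneg (norm_nonneg _) _)]
    calc ‖y‖ ^ (-p) ≤ ((1 + ‖y‖) / (1 + 1/r)) ^ (-p) := h2
      _ = (1 + 1/r) ^ p * (1 + ‖y‖) ^ (-p) := by
          rw [Real.div_rpow (by positivity) (by positivity),
            Real.rpow_neg (by positivity : (0:ℝ) ≤ 1 + 1/r)]
          field_simp

lemma aux_polar (n : ℕ) (hn : 1 ≤ n) (f : ℝ → ℝ) :
    ∫ x : EuclideanSpace ℝ (Fin n), f ‖x‖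
      = (n : ℝ) * (volume (Metric.ball (0 : EuclideanSpace ℝ (Fin n)) 1)).toReal
        * ∫ y in Ioi (0:ℝ), y ^ (n - 1) * f y := by
  haveI : Nontrivial (EuclideanSpace ℝ (Fin n)) :=
    Module.nontrivial_of_finrank_pos (R := ℝ)
      (by rw [finrank_euclideanSpace_fin]; omega)
  have h := MeasureTheory.integral_fun_norm_addHaar
    (volume : Measure (EuclideanSpace ℝ (Fin n))) f
  rw [finrank_euclideanSpace_fin] at h
  rw [h]
  simp only [nsmul_eq_mul, smul_eq_mul, mul_assoc]
  rfl

lemma aux_radial (n : ℕ) (hn : 1 ≤ n) {s r : ℝ} (hs : 0 < s) (hr : 0 < r) :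
    ∫ y in (Metric.ball (0 : EuclideanSpace ℝ (Fin n)) r)ᶜ, ‖y‖ ^ (-((n:ℝ) + 2*s))
      = sphereArea n * (r ^ (-(2*s)) / (2*s)) := by
  rw [← integral_indicator (measurableSet_ball.compl)]
  have hind : ∀ y : EuclideanSpace ℝ (Fin n),
      ((Metric.ball (0:EuclideanSpace ℝ (Fin n)) r)ᶜ).indicator
          (fun y => ‖y‖ ^ (-((n:ℝ)+2*s))) y
        = (Ici r).indicator (fun t : ℝ => t ^ (-((n:ℝ)+2*s))) ‖y‖ := by
    intro y
    by_cases h : r ≤ ‖y‖ <;>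
      simp [Set.indicator_apply, Metric.mem_ball, dist_zero_right, h, not_lt, lt_iff_not_ge]
  rw [show (fun y : EuclideanSpace ℝ (Fin n) =>
      ((Metric.ball (0:EuclideanSpace ℝ (Fin n)) r)ᶜ).indicator
        (fun y => ‖y‖ ^ (-((n:ℝ)+2*s))) y)
      = fun y => (Ici r).indicator (fun t : ℝ => t ^ (-((n:ℝ)+2*s))) ‖y‖ from funext hind]
  rw [aux_polar n hn]
  have h2 : ∀ y ∈ Ioi (0:ℝ),
      y ^ (n - 1) * (Ici r).indicator (fun t : ℝ => t ^ (-((n:ℝ)+2*s))) y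
      = (Ici r).indicator (fun t : ℝ => t ^ (n-1) * t ^ (-((n:ℝ)+2*s))) y := by
    intro y _
    by_cases h : y ∈ Ici r <;> simp [Set.indicator_apply, h]
  rw [setIntegral_congr_fun measurableSet_Ioi h2, setIntegral_indicator measurableSet_Ici]
  have hset : (∫ x in Ioi (0:ℝ) ∩ Ici r, x ^ (n-1) * x ^ (-((n:ℝ)+2*s)))
      = ∫ x in Ioi r, x ^ (n-1) * x ^ (-((n:ℝ)+2*s)) := by
    apply setIntegral_congr_set
    have hsub : Ici r ⊆ Ioi (0:ℝ) := fun x hx => lt_of_lt_of_le hr hx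
    rw [Set.inter_eq_right.mpr hsub]
    exact (Ioi_ae_eq_Ici (a := r)).symm
  rw [hset]
  have h3 : ∀ y ∈ Ioi (r:ℝ), y ^ (n-1) * y ^ (-((n:ℝ)+2*s)) = y ^ (-(1+2*s)) := by
    intro y hy
    have hy0 : 0 < y := lt_trans hr hy
    rw [← Real.rpow_natCast y (n-1), ← Real.rpow_add hy0]
    congr 1
    rw [Nat.cast_sub hn]
    push_cast
    ring
  rw [setIntegral_congr_fun measurableSet_Ioi h3,
    integral_Ioi_rpow_of_lt (by linarith) hr]
  rw [sphereArea]
  rw [show -(1+2*s) + 1 = -(2*s) by ring]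
  rw [neg_div, div_neg, neg_neg]

lemma aux_part1 (n : ℕ) (hn : 1 ≤ n) {s : ℝ} (hs : 0 < s) {R : ℝ} (hR : 0 < R)
    (x : EuclideanSpace ℝ (Fin n)) (hx : ‖x‖ < R) :
    (∫ y in (Metric.ball (0 : EuclideanSpace ℝ (Fin n)) R)ᶜ, ‖x - y‖ ^ (-((n:ℝ) + 2 * s)))
      ≤ sphereArea n / (2 * s) * (R - ‖x‖) ^ (-(2 * s)) := by
  set p : ℝ := (n:ℝ) + 2 * s with hp_def
  have hp : (n:ℝ) < p := by simp [hp_def]; linarith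
  set r : ℝ := R - ‖x‖ with hr_def
  have hr : 0 < r := by simp [hr_def]; linarith
  set A : Set (EuclideanSpace ℝ (Fin n)) := (Metric.ball (0:EuclideanSpace ℝ (Fin n)) R)ᶜ
  set C : Set (EuclideanSpace ℝ (Fin n)) := (Metric.ball (0:EuclideanSpace ℝ (Fin n)) r)ᶜ
  set F : EuclideanSpace ℝ (Fin n) → ℝ :=
    fun y => A.indicator (fun y => ‖x - y‖ ^ (-p)) y with hF_def
  have hCint : Integrable (C.indicator (fun z : EuclideanSpace ℝ (Fin n) => ‖z‖ ^ (-p))) :=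
    (integrable_indicator_iff measurableSet_ball.compl).2
      (aux_integrableOn_compl n hn hp hr)
  have step1 : (∫ y in A, ‖x - y‖ ^ (-p)) = ∫ z : EuclideanSpace ℝ (Fin n), F (z + x) := by
    rw [← integral_indicator measurableSet_ball.compl]
    exact (MeasureTheory.integral_add_right_eq_self F x).symm
  rw [step1]
  have hle : ∀ z : EuclideanSpace ℝ (Fin n),
      F (z + x) ≤ C.indicator (fun z : EuclideanSpace ℝ (Fin n) => ‖z‖ ^ (-p)) z := by
    intro z
    by_cases h : z + x ∈ A
    · have h1 : F (z + x) = ‖z‖ ^ (-p) := by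
        rw [hF_def]
        simp only [Set.indicator_of_mem h]
        congr 1
        rw [show x - (z + x) = -z by abel, norm_neg]
      have hz : z ∈ C := by
        simp only [C, mem_compl_iff, Metric.mem_ball, dist_zero_right, not_lt]
        have hA : R ≤ ‖z + x‖ := by
          have := h
          simp only [A, mem_compl_iff, Metric.mem_ball, dist_zero_right, not_lt] at this
          exact this
        have := norm_add_le z x
        simp only [hr_def]
        linarith
      rw [h1, Set.indicator_of_mem hz]
    · rw [hF_def]
      simp only [Set.indicator_of_notMem h]
      exact Set.indicator_apply_nonneg fun _ => Real.rpow_nonneg (norm_nonneg _) _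
  have h0 : 0 ≤ᵐ[volume] fun z : EuclideanSpace ℝ (Fin n) => F (z + x) := by
    filter_upwards with z
    exact Set.indicator_apply_nonneg fun _ => Real.rpow_nonneg (norm_nonneg _) _
  calc ∫ z : EuclideanSpace ℝ (Fin n), F (z + x)
      ≤ ∫ z : EuclideanSpace ℝ (Fin n),
          C.indicator (fun z : EuclideanSpace ℝ (Fin n) => ‖z‖ ^ (-p)) z :=
        integral_mono_of_nonneg h0 hCint (Eventually.of_forall hle)
    _ = ∫ z in C, ‖z‖ ^ (-p) := integral_indicator measurableSet_ball.compl
    _ = sphereArea n * (r ^ (-(2*s)) / (2*s)) := aux_radial n hn hs hr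
    _ = sphereArea n / (2 * s) * r ^ (-(2*s)) := by ring

lemma aux_I1 {s R : ℝ} (hs : 0 < s) (hR : 2 ≤ R) :
    ∫ t in Ioo (0:ℝ) (R-1), (R - t) ^ (-(2*s))
      = if s = 1/2 then Real.log R else (R ^ (1 - 2*s) - 1) / (1 - 2*s) := by
  have h1R : (1:ℝ) ≤ R := by linarith
  have h0 : (0:ℝ) ≤ R - 1 := by linarith
  have hIoc : ∫ t in Ioo (0:ℝ) (R-1), (R - t) ^ (-(2*s))
      = ∫ t in (0:ℝ)..(R-1), (R - t) ^ (-(2*s)) := by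
    rw [intervalIntegral.integral_of_le h0, MeasureTheory.integral_Ioc_eq_integral_Ioo]
  rw [hIoc, intervalIntegral.integral_comp_sub_left (fun u : ℝ => u ^ (-(2*s))) R]
  rw [show R - (R-1) = 1 by ring, sub_zero]
  have h0mem : (0:ℝ) ∉ uIcc (1:ℝ) R := by
    rw [Set.uIcc_of_le h1R]
    simp only [Set.mem_Icc, not_and_or, not_le]
    left; norm_num
  by_cases hhalf : s = 1/2
  · subst hhalf
    simp only [if_pos rfl]
    have : ∀ u : ℝ, u ^ (-(2*(1/2 : ℝ))) = u⁻¹ := by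
      intro u
      norm_num
      rw [show (-1 : ℝ) = ((-1 : ℤ) : ℝ) by norm_num, Real.rpow_intCast, zpow_neg_one]
    rw [intervalIntegral.integral_congr (fun u _ => this u)]
    rw [integral_inv h0mem, div_one]
    simp
  · rw [if_neg hhalf]
    have hne : -(2*s) ≠ -1 := by
      intro h
      apply hhalf
      linarith [neg_injective h]
    rw [integral_rpow (Or.inr ⟨hne, h0mem⟩)]
    rw [Real.one_rpow]
    rw [show -(2*s) + 1 = 1 - 2*s by ring]

lemma aux_outer (n : ℕ) (hn : 1 ≤ n) {s R : ℝ} (hs : 0 < s) (hR : 2 ≤ R) :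
    ∫ x in Metric.ball (0 : EuclideanSpace ℝ (Fin n)) (R-1), (R - ‖x‖) ^ (-(2*s))
      = sphereArea n * ∫ t in Ioo (0:ℝ) (R-1), t ^ (n-1) * (R - t) ^ (-(2*s)) := by
  rw [← integral_indicator measurableSet_ball]
  have hind : (fun x : EuclideanSpace ℝ (Fin n) =>
      (Metric.ball (0 : EuclideanSpace ℝ (Fin n)) (R-1)).indicator
        (fun x => (R - ‖x‖) ^ (-(2*s))) x)
      = fun x => (Iio (R-1)).indicator (fun t : ℝ => (R - t) ^ (-(2*s))) ‖x‖ := by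
    funext x
    by_cases h : ‖x‖ < R - 1 <;>
      simp [Set.indicator_apply, Metric.mem_ball, dist_zero_right, h]
  rw [hind, aux_polar n hn]
  have h2 : ∀ y ∈ Ioi (0:ℝ),
      y ^ (n - 1) * (Iio (R-1)).indicator (fun t : ℝ => (R - t) ^ (-(2*s))) y
      = (Iio (R-1)).indicator (fun t : ℝ => t ^ (n-1) * (R - t) ^ (-(2*s))) y := by
    intro y _
    by_cases h : y ∈ Iio (R-1) <;> simp [Set.indicator_apply, h]
  rw [setIntegral_congr_fun measurableSet_Ioi h2, setIntegral_indicator measurableSet_Iio]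
  rw [show Ioi (0:ℝ) ∩ Iio (R-1) = Ioo (0:ℝ) (R-1) from Set.Ioi_inter_Iio]
  rfl

lemma aux_cont {s R : ℝ} (hs : 0 < s) (hR : 2 ≤ R) :
    ContinuousOn (fun t : ℝ => (R - t) ^ (-(2*s))) (Icc 0 (R-1)) := by
  apply ContinuousOn.rpow_const
  · exact (continuous_const.sub continuous_id).continuousOn
  · intro t ht
    left
    intro h
    simp only [sub_eq_zero] at h
    linarith [ht.2]

lemma aux_mono1d (n : ℕ) (hn : 1 ≤ n) {s R : ℝ} (hs : 0 < s) (hR : 2 ≤ R) :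
    ∫ t in Ioo (0:ℝ) (R-1), t ^ (n-1) * (R - t) ^ (-(2*s))
      ≤ R ^ ((n:ℝ) - 1) * ∫ t in Ioo (0:ℝ) (R-1), (R - t) ^ (-(2*s)) := by
  have hc1 := aux_cont hs hR
  have hint1 : IntegrableOn (fun t : ℝ => (R - t) ^ (-(2*s))) (Ioo 0 (R-1)) :=
    (hc1.integrableOn_compact isCompact_Icc).mono_set Set.Ioo_subset_Icc_self
  have hintf : IntegrableOn (fun t : ℝ => t ^ (n-1) * (R - t) ^ (-(2*s))) (Ioo 0 (R-1)) :=
    (((continuous_pow (n-1)).continuousOn.mul hc1).integrableOn_compact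
      isCompact_Icc).mono_set Set.Ioo_subset_Icc_self
  rw [← MeasureTheory.integral_const_mul]
  apply setIntegral_mono_on hintf (hint1.const_mul _) measurableSet_Ioo
  intro t ht
  apply mul_le_mul_of_nonneg_right _ (Real.rpow_nonneg (by linarith [ht.2] : (0:ℝ) ≤ R - t) _)
  calc t ^ (n-1) ≤ R ^ (n-1) := pow_le_pow_left₀ ht.1.le (by linarith [ht.2]) _
    _ = R ^ (((n-1 : ℕ)):ℝ) := (Real.rpow_natCast R (n-1)).symm
    _ = R ^ ((n:ℝ) - 1) := by rw [Nat.cast_sub hn]; norm_num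

/-- (i) for `|x| < R`,
`∫_{|y| ≥ R} |x−y|^{−n−2s} dy ≤ (σ_{n−1}/(2s)) (R−|x|)^{−2s}`; (ii) consequently,
`∫_{B_{R−1}} ∫_{|y| ≥ R} |x−y|^{−n−2s} dy dx ≤ (C/s) Φ_{n,s}(R)` for `R ≥ 2`,
with `C` depending only on `n`. -/
theorem far_field_kernel_bounds (n : ℕ) (hn : 1 ≤ n) :
    (∀ s ∈ Set.Ioo (0 : ℝ) 1, ∀ R : ℝ, 0 < R →
      ∀ x : EuclideanSpace ℝ (Fin n), ‖x‖ < R →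
        (∫ y in (Metric.ball (0 : EuclideanSpace ℝ (Fin n)) R)ᶜ,
            ‖x - y‖ ^ (-((n : ℝ) + 2 * s)))
          ≤ sphereArea n / (2 * s) * (R - ‖x‖) ^ (-(2 * s))) ∧
    (∃ C > 0, ∀ s ∈ Set.Ioo (0 : ℝ) 1, ∀ R : ℝ, 2 ≤ R →
      (∫ x in Metric.ball (0 : EuclideanSpace ℝ (Fin n)) (R - 1),
          ∫ y in (Metric.ball (0 : EuclideanSpace ℝ (Fin n)) R)ᶜ,
            ‖x - y‖ ^ (-((n : ℝ) + 2 * s)))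
        ≤ C / s * Phi n s R) := by
  have hσ : 0 < sphereArea n := by
    rw [sphereArea]
    apply mul_pos
    · exact_mod_cast Nat.pos_of_ne_zero (by omega)
    · exact ENNReal.toReal_pos (Metric.measure_ball_pos volume (0:EuclideanSpace ℝ (Fin n)) one_pos).ne'
        measure_ball_lt_top.ne
  constructor
  · intro s hs R hR x hx
    exact aux_part1 n hn hs.1 hR x hx
  · refine ⟨sphereArea n ^ 2 / 2, by positivity, ?_⟩
    intro s hs R hR
    have hs0 : 0 < s := hs.1
    have hR0 : (0:ℝ) < R := by linarith
    have hgc : ContinuousOn (fun x : EuclideanSpace ℝ (Fin n) => (R - ‖x‖) ^ (-(2*s)))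
        (Metric.closedBall 0 (R-1)) := by
      apply ContinuousOn.rpow_const
      · exact (continuous_const.sub continuous_norm).continuousOn
      · intro x hx
        left
        rw [Metric.mem_closedBall, dist_zero_right] at hx
        intro h
        simp only [sub_eq_zero] at h
        linarith
    have hgint : IntegrableOn
        (fun x : EuclideanSpace ℝ (Fin n) => sphereArea n / (2*s) * (R - ‖x‖) ^ (-(2*s)))
        (Metric.ball 0 (R-1)) := by
      have h1 : IntegrableOn
          (fun x : EuclideanSpace ℝ (Fin n) => sphereArea n / (2*s) * (R - ‖x‖) ^ (-(2*s)))
          (Metric.closedBall 0 (R-1)) :=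
        (hgc.integrableOn_compact (isCompact_closedBall _ _)).const_mul (sphereArea n / (2*s))
      exact h1.mono_set Metric.ball_subset_closedBall
    have h0 : 0 ≤ᵐ[volume.restrict (Metric.ball (0:EuclideanSpace ℝ (Fin n)) (R-1))]
        fun x : EuclideanSpace ℝ (Fin n) =>
          ∫ y in (Metric.ball (0 : EuclideanSpace ℝ (Fin n)) R)ᶜ,
            ‖x - y‖ ^ (-((n : ℝ) + 2 * s)) := by
      filter_upwards with x
      exact integral_nonneg fun y => Real.rpow_nonneg (norm_nonneg _) _
    have hle : (fun x : EuclideanSpace ℝ (Fin n) =>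
          ∫ y in (Metric.ball (0 : EuclideanSpace ℝ (Fin n)) R)ᶜ,
            ‖x - y‖ ^ (-((n : ℝ) + 2 * s)))
        ≤ᵐ[volume.restrict (Metric.ball (0:EuclideanSpace ℝ (Fin n)) (R-1))]
        fun x => sphereArea n / (2*s) * (R - ‖x‖) ^ (-(2*s)) := by
      rw [Filter.EventuallyLE, ae_restrict_iff' measurableSet_ball]
      filter_upwards with x hx
      rw [Metric.mem_ball, dist_zero_right] at hx
      exact aux_part1 n hn hs0 hR0 x (by linarith)
    calc (∫ x in Metric.ball (0 : EuclideanSpace ℝ (Fin n)) (R - 1),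
          ∫ y in (Metric.ball (0 : EuclideanSpace ℝ (Fin n)) R)ᶜ,
            ‖x - y‖ ^ (-((n : ℝ) + 2 * s)))
        ≤ ∫ x in Metric.ball (0 : EuclideanSpace ℝ (Fin n)) (R - 1),
            sphereArea n / (2*s) * (R - ‖x‖) ^ (-(2*s)) :=
          integral_mono_of_nonneg h0 hgint hle
      _ = sphereArea n / (2*s) *
            ∫ x in Metric.ball (0 : EuclideanSpace ℝ (Fin n)) (R - 1),
              (R - ‖x‖) ^ (-(2*s)) := MeasureTheory.integral_const_mul _ _
      _ = sphereArea n / (2*s) * (sphereArea n *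
            ∫ t in Ioo (0:ℝ) (R-1), t ^ (n-1) * (R - t) ^ (-(2*s))) := by
          rw [aux_outer n hn hs0 hR]
      _ ≤ sphereArea n / (2*s) * (sphereArea n *
            (R ^ ((n:ℝ) - 1) * ∫ t in Ioo (0:ℝ) (R-1), (R - t) ^ (-(2*s)))) := by
          apply mul_le_mul_of_nonneg_left _ (by positivity)
          exact mul_le_mul_of_nonneg_left (aux_mono1d n hn hs0 hR) hσ.le
      _ = sphereArea n ^ 2 / 2 / s * Phi n s R := by
          rw [aux_I1 hs0 hR, Phi]
          by_cases hhalf : s = 1/2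
          · rw [if_pos hhalf, if_pos hhalf]
            subst hhalf
            ring
          · rw [if_neg hhalf, if_neg hhalf]
            field_simp
end

section
/- For every n ≥ 2 there exists a constant C, depending only on n, such that for every s ∈ (0,1) and every R ≥ 2 one has ∫_{B_R∖B_{R−1}} ∫_{B_{R+1}∖B_R} |x−y|^{−(n+2s−1)} dx dy ≤ C R^{n−1} / (s(1−s)), where B_r = {x ∈ ℝ^n : |x| < r}. -/
open MeasureTheory Filter Set

open Metric Pointwise


theorem pow_sub_pow_le_aux (m : ℕ) {a b : ℝ} (hb : 0 ≤ b) (hba : b ≤ a) :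
    a ^ (m+1) - b ^ (m+1) ≤ (m+1) * a ^ m * (a - b) := by
  induction m with
  | zero => simp
  | succ k ih =>
    have ha : 0 ≤ a := hb.trans hba
    have hpow : b ^ (k+1) ≤ a ^ (k+1) := pow_le_pow_left₀ hb hba _
    have h1 : a ^ (k+1+1) - b ^ (k+1+1) = a * (a ^ (k+1) - b ^ (k+1)) + b ^ (k+1) * (a - b) := by
      ring
    have h2 : a * (a ^ (k+1) - b ^ (k+1)) ≤ a * ((k+1) * a ^ k * (a - b)) :=
      mul_le_mul_of_nonneg_left ih ha
    have h3 : b ^ (k+1) * (a - b) ≤ a ^ (k+1) * (a - b) :=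
      mul_le_mul_of_nonneg_right hpow (sub_nonneg.2 hba)
    have h4 : a * ((k+1:ℕ) * a ^ k * (a - b)) = ((k+1:ℕ)) * a ^ (k+1) * (a-b) := by
      push_cast; ring
    push_cast
    push_cast at h2 h4
    nlinarith [h1, h2, h3, h4]

variable {n : ℕ}

theorem ballVol [NeZero n] (x : EuclideanSpace ℝ (Fin n)) {r : ℝ} (hr : 0 ≤ r) :
    volume (ball x r) = ENNReal.ofReal (r ^ n) * volume (ball (0 : EuclideanSpace ℝ (Fin n)) 1) := by
  rw [Measure.addHaar_ball volume x hr, finrank_euclideanSpace_fin]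

theorem shellVol [NeZero n] (x : EuclideanSpace ℝ (Fin n)) {r₁ r₂ : ℝ} (h0 : 0 ≤ r₁)
    (h12 : r₁ ≤ r₂) :
    volume (ball x r₂ \ ball x r₁)
      = ENNReal.ofReal (r₂ ^ n - r₁ ^ n) * volume (ball (0 : EuclideanSpace ℝ (Fin n)) 1) := by
  rw [measure_diff (ball_subset_ball h12) measurableSet_ball.nullMeasurableSet
      measure_ball_lt_top.ne, ballVol x (h0.trans h12), ballVol x h0,
      ENNReal.ofReal_sub _ (by positivity), ENNReal.sub_mul (fun _ _ => measure_ball_lt_top.ne)]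

theorem shellVol_le [NeZero n] (hn : 1 ≤ n) (x : EuclideanSpace ℝ (Fin n)) {r₁ r₂ : ℝ}
    (h0 : 0 ≤ r₁) (h12 : r₁ ≤ r₂) :
    volume (ball x r₂ \ ball x r₁)
      ≤ ENNReal.ofReal (n * r₂ ^ (n-1) * (r₂ - r₁))
        * volume (ball (0 : EuclideanSpace ℝ (Fin n)) 1) := by
  rw [shellVol x h0 h12]
  gcongr
  obtain ⟨m, rfl⟩ : ∃ m, n = m + 1 := ⟨n - 1, by omega⟩
  simpa using pow_sub_pow_le_aux m h0 h12

theorem lemA [NeZero n] (hn : 1 ≤ n) {R : ℝ} (hR : 2 ≤ R) (x : EuclideanSpace ℝ (Fin n))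
    (hx : ‖x‖ ≤ R + 1) {ρ : ℝ} (hρ : 0 < ρ) :
    volume ((ball (0:EuclideanSpace ℝ (Fin n)) R \ ball 0 (R-1)) ∩ ball x ρ)
      ≤ ENNReal.ofReal (6 * n * ρ ^ (n-1))
        * volume (ball (0:EuclideanSpace ℝ (Fin n)) 1) := by
  set ω := volume (ball (0:EuclideanSpace ℝ (Fin n)) 1) with hω
  have hR0 : (0:ℝ) < R := by linarith
  have hR1 : (0:ℝ) < R - 1 := by linarith
  have hρ1 : (0:ℝ) ≤ ρ ^ (n-1) := by positivity
  by_cases hcase : ρ ≤ 3 * R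
  · -- main case
    set lam : ℝ := (R-1)/R with hlam
    have hlam0 : 0 < lam := by positivity
    have hlam1 : lam < 1 := by rw [hlam, div_lt_one hR0]; linarith
    have hlamR : lam * R = R - 1 := by rw [hlam]; field_simp
    set x' : EuclideanSpace ℝ (Fin n) := (R/(R-1)) • x with hx'
    have hxlam : x = lam • x' := by
      rw [hx', smul_smul, hlam, show (R-1)/R * (R/(R-1)) = 1 by field_simp, one_smul]
    set δ : ℝ := ‖x' - x‖ with hδdef
    have hδ : δ = ‖x‖ / (R-1) := by
      have hxx : x' - x = (1/(R-1)) • x := by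
        rw [hx', show (R:ℝ)/(R-1) = 1 + 1/(R-1) by field_simp; ring]
        module
      rw [hδdef, hxx, norm_smul, Real.norm_eq_abs,
        abs_of_pos (show (0:ℝ) < 1/(R-1) by positivity)]
      ring
    have hδ0 : 0 ≤ δ := norm_nonneg _
    have hδ3 : δ ≤ 3 := by
      rw [hδ, div_le_iff₀ hR1]
      linarith
    set U := ball x ρ with hU
    set U' := ball x' ρ with hU'
    set cresS := ball x ρ \ ball x (max (ρ - δ) 0) with hcresS
    have incl1 : ball (0:EuclideanSpace ℝ (Fin n)) R ∩ U
        ⊆ (ball (0:EuclideanSpace ℝ (Fin n)) R ∩ U') ∪ cresS := by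
      intro y hy
      obtain ⟨hyR, hyU⟩ := hy
      by_cases hy' : y ∈ U'
      · exact Or.inl ⟨hyR, hy'⟩
      · refine Or.inr ⟨hyU, ?_⟩
        simp only [hU', mem_ball, not_lt] at hy'
        simp only [mem_ball, not_lt]
        have h1 : dist y x' ≤ dist y x + dist x x' := dist_triangle _ _ _
        have h2 : dist x x' = δ := by rw [dist_comm, dist_eq_norm]
        refine max_le ?_ dist_nonneg
        linarith
    have incl2 : lam • (ball (0:EuclideanSpace ℝ (Fin n)) R ∩ U')
        ⊆ ball (0:EuclideanSpace ℝ (Fin n)) (R-1) ∩ U := by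
      rintro z ⟨w, ⟨hwR, hwU'⟩, rfl⟩
      constructor
      · rw [mem_ball_zero_iff, norm_smul, Real.norm_eq_abs, abs_of_pos hlam0]
        rw [mem_ball_zero_iff] at hwR
        calc lam * ‖w‖ < lam * R := mul_lt_mul_of_pos_left hwR hlam0
        _ = R - 1 := hlamR
      · show lam • w ∈ ball x ρ
        rw [mem_ball]
        have hz : lam • w - x = lam • (w - x') := by rw [hxlam]; module
        rw [dist_eq_norm, hz, norm_smul, Real.norm_eq_abs, abs_of_pos hlam0]
        rw [hU', mem_ball, dist_eq_norm] at hwU'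
        calc lam * ‖w - x'‖ < lam * ρ := mul_lt_mul_of_pos_left hwU' hlam0
        _ ≤ 1 * ρ := by nlinarith
        _ = ρ := one_mul ρ
    set X' := volume (ball (0:EuclideanSpace ℝ (Fin n)) R ∩ U') with hX'
    have hX'le : X' ≤ ENNReal.ofReal (ρ^n) * ω := by
      rw [hX']
      exact le_trans (measure_mono inter_subset_right) (le_of_eq (ballVol x' hρ.le))
    have hX'fin : X' ≠ ⊤ :=
      ne_top_of_le_ne_top (ENNReal.mul_ne_top ENNReal.ofReal_ne_top measure_ball_lt_top.ne) hX'le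
    set t : ENNReal := ENNReal.ofReal (lam ^ n) with ht
    have ht1 : t ≤ 1 := by
      rw [ht, ← ENNReal.ofReal_one]
      exact ENNReal.ofReal_le_ofReal (pow_le_one₀ hlam0.le hlam1.le)
    have hsplit : volume (ball (0:EuclideanSpace ℝ (Fin n)) (R-1) ∩ U)
        + volume ((ball (0:EuclideanSpace ℝ (Fin n)) R \ ball 0 (R-1)) ∩ U)
        = volume (ball (0:EuclideanSpace ℝ (Fin n)) R ∩ U) := by
      rw [← measure_union ?_
          ((measurableSet_ball.diff measurableSet_ball).inter measurableSet_ball)]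
      · congr 1
        rw [← union_inter_distrib_right, union_diff_cancel (ball_subset_ball (by linarith))]
      · exact (disjoint_sdiff_self_right.mono_left inter_subset_left).mono_right
          inter_subset_left
    have key2 : t * X' ≤ volume (ball (0:EuclideanSpace ℝ (Fin n)) (R-1) ∩ U) := by
      calc t * X' = volume (lam • (ball (0:EuclideanSpace ℝ (Fin n)) R ∩ U')) := by
            rw [Measure.addHaar_smul_of_nonneg volume hlam0.le, finrank_euclideanSpace_fin]
      _ ≤ _ := measure_mono incl2
    have key3 : volume (ball (0:EuclideanSpace ℝ (Fin n)) R ∩ U) ≤ X' + volume cresS :=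
      le_trans (measure_mono incl1) (measure_union_le _ _)
    have hXsplit : X' = t * X' + (1 - t) * X' := by
      rw [← add_mul, add_tsub_cancel_of_le ht1, one_mul]
    have hmain : volume ((ball (0:EuclideanSpace ℝ (Fin n)) R \ ball 0 (R-1)) ∩ U)
        ≤ (1 - t) * X' + volume cresS := by
      have main : volume ((ball (0:EuclideanSpace ℝ (Fin n)) R \ ball 0 (R-1)) ∩ U) + t * X'
          ≤ ((1 - t) * X' + volume cresS) + t * X' := by
        calc volume ((ball (0:EuclideanSpace ℝ (Fin n)) R \ ball 0 (R-1)) ∩ U) + t * X'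
            ≤ volume ((ball (0:EuclideanSpace ℝ (Fin n)) R \ ball 0 (R-1)) ∩ U)
              + volume (ball (0:EuclideanSpace ℝ (Fin n)) (R-1) ∩ U) := by gcongr
          _ = volume (ball (0:EuclideanSpace ℝ (Fin n)) R ∩ U) := by rw [add_comm]; exact hsplit
          _ ≤ X' + volume cresS := key3
          _ = ((1 - t) * X' + volume cresS) + t * X' := by
              conv_lhs => rw [hXsplit]
              ac_rfl
      exact ENNReal.le_of_add_le_add_right (ENNReal.mul_ne_top (ht1.trans_lt (by norm_num)).ne
        hX'fin) main
    have hB1 : (1 - t) * X' ≤ ENNReal.ofReal (n * ρ^n / R) * ω := by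
      have h1t : (1:ENNReal) - t = ENNReal.ofReal (1 - lam^n) := by
        rw [ht, ENNReal.ofReal_sub _ (by positivity), ENNReal.ofReal_one]
      have hbern : 1 - lam^n ≤ n * (1 - lam) := by
        have hb := one_add_mul_le_pow (a := lam - 1) (by linarith) n
        have h15 : (1 + (lam - 1)) = lam := by ring
        rw [h15] at hb
        linarith
      have hlamval : 1 - lam = 1/R := by rw [hlam]; field_simp; ring
      calc (1 - t) * X' ≤ ENNReal.ofReal (n * (1/R)) * (ENNReal.ofReal (ρ^n) * ω) := by
            rw [h1t]
            exact mul_le_mul' (ENNReal.ofReal_le_ofReal (by rw [← hlamval]; exact hbern)) hX'le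
      _ = ENNReal.ofReal (n * ρ^n / R) * ω := by
            rw [← mul_assoc, ← ENNReal.ofReal_mul (by positivity)]
            ring_nf
    have hB2 : volume cresS ≤ ENNReal.ofReal (n * ρ^(n-1) * 3) * ω := by
      rw [hcresS]
      refine le_trans (shellVol_le hn x (le_max_right _ _) (max_le (by linarith) hρ.le)) ?_
      have hm : ρ - δ ≤ max (ρ - δ) 0 := le_max_left _ _
      have h3 : ρ - max (ρ - δ) 0 ≤ δ := by linarith
      refine mul_le_mul' (ENNReal.ofReal_le_ofReal ?_) le_rfl
      calc (n:ℝ) * ρ^(n-1) * (ρ - max (ρ-δ) 0) ≤ n * ρ^(n-1) * δ :=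
            mul_le_mul_of_nonneg_left h3 (by positivity)
      _ ≤ n * ρ^(n-1) * 3 := mul_le_mul_of_nonneg_left hδ3 (by positivity)
    calc volume ((ball (0:EuclideanSpace ℝ (Fin n)) R \ ball 0 (R-1)) ∩ ball x ρ)
        ≤ ENNReal.ofReal (n * ρ^n / R) * ω + ENNReal.ofReal (n * ρ^(n-1) * 3) * ω :=
          le_trans hmain (by gcongr)
      _ = ENNReal.ofReal (n * ρ^n / R + n * ρ^(n-1) * 3) * ω := by
          rw [← add_mul, ← ENNReal.ofReal_add (by positivity) (by positivity)]
      _ ≤ ENNReal.ofReal (6 * n * ρ^(n-1)) * ω := by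
          gcongr
          have hρn : ρ^n = ρ^(n-1) * ρ := by
            conv_lhs => rw [show n = (n-1) + 1 by omega]
            rw [pow_succ]
          rw [hρn]
          have hd : (n:ℝ) * (ρ^(n-1) * ρ) / R ≤ n * ρ^(n-1) * 3 := by
            rw [div_le_iff₀ hR0]
            have h1 : (0:ℝ) ≤ (n:ℝ) * ρ^(n-1) := by positivity
            nlinarith
          linarith
  · push_neg at hcase
    calc volume ((ball (0:EuclideanSpace ℝ (Fin n)) R \ ball 0 (R-1)) ∩ ball x ρ)
        ≤ volume (ball (0:EuclideanSpace ℝ (Fin n)) R \ ball 0 (R-1)) :=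
          measure_mono inter_subset_left
      _ ≤ ENNReal.ofReal (n * R^(n-1) * (R - (R-1))) * ω :=
          shellVol_le hn 0 (by linarith) (by linarith)
      _ ≤ ENNReal.ofReal (6 * n * ρ^(n-1)) * ω := by
          have hRρ : R ≤ ρ := by linarith
          have hpw : R ^ (n-1) ≤ ρ ^ (n-1) := pow_le_pow_left₀ (by linarith) hRρ _
          refine mul_le_mul' (ENNReal.ofReal_le_ofReal ?_) le_rfl
          nlinarith [hpw, pow_nonneg hR0.le (n-1)]

theorem geoSumBound {σ : ℝ} (h0 : 0 < σ) (h2 : σ ≤ 2) :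
    (∑' k:ℕ, (ENNReal.ofReal ((2:ℝ) ^ (-σ)))^k) ≤ ENNReal.ofReal (4/σ) := by
  have h2σ : (1:ℝ) + σ/2 ≤ (2:ℝ)^σ := by
    have hl2 : (0.6931471803:ℝ) < Real.log 2 := Real.log_two_gt_d9
    have hexp := Real.add_one_le_exp (σ * Real.log 2)
    calc (1:ℝ) + σ/2 ≤ 1 + σ * Real.log 2 := by nlinarith
    _ ≤ Real.exp (σ * Real.log 2) := by linarith
    _ = (2:ℝ)^σ := by rw [Real.rpow_def_of_pos two_pos, mul_comm]
  have hq : (2:ℝ)^(-σ) ≤ 1 - σ/4 := by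
    rw [Real.rpow_neg (by norm_num : (0:ℝ) ≤ 2)]
    have hp1 : (0:ℝ) < 1 + σ/2 := by linarith
    have h1 : ((2:ℝ)^σ)⁻¹ ≤ (1+σ/2)⁻¹ := by
      apply inv_anti₀ hp1 h2σ
    have h2' : (1+σ/2)⁻¹ ≤ 1 - σ/4 := by
      rw [inv_eq_one_div, div_le_iff₀ hp1]
      nlinarith
    linarith
  rw [ENNReal.tsum_geometric]
  have hle : ENNReal.ofReal ((2:ℝ)^(-σ)) ≤ ENNReal.ofReal (1 - σ/4) :=
    ENNReal.ofReal_le_ofReal hq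
  have hσ4 : (0:ℝ) ≤ 1 - σ/4 := by linarith
  have key : ENNReal.ofReal (σ/4) ≤ 1 - ENNReal.ofReal ((2:ℝ)^(-σ)) := by
    have h1 : ENNReal.ofReal (σ/4) = 1 - ENNReal.ofReal (1 - σ/4) := by
      rw [← ENNReal.ofReal_one, ← ENNReal.ofReal_sub _ hσ4]
      norm_num
    rw [h1]
    exact tsub_le_tsub_left hle 1
  calc (1 - ENNReal.ofReal ((2:ℝ)^(-σ)))⁻¹ ≤ (ENNReal.ofReal (σ/4))⁻¹ :=
        ENNReal.inv_le_inv' key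
  _ = ENNReal.ofReal ((σ/4)⁻¹) := (ENNReal.ofReal_inv_of_pos (by positivity)).symm
  _ = ENNReal.ofReal (4/σ) := by rw [inv_div]

theorem exists_dyadic {t : ℝ} (ht : 0 < t) :
    (∃ k:ℕ, ((2:ℝ)⁻¹)^(k+1) ≤ t ∧ t < ((2:ℝ)⁻¹)^k)
      ∨ (∃ k:ℕ, (2:ℝ)^k ≤ t ∧ t < (2:ℝ)^(k+1)) := by
  classical
  by_cases h1 : t < 1
  · left
    have hexP : ∃ k:ℕ, ((2:ℝ)⁻¹)^(k+1) ≤ t := by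
      obtain ⟨m, hm⟩ := exists_pow_lt_of_lt_one ht (by norm_num : (2:ℝ)⁻¹ < 1)
      match m, hm with
      | 0, hm => exact absurd hm (by simp; linarith)
      | (j+1), hm => exact ⟨j, hm.le⟩
    refine ⟨Nat.find hexP, Nat.find_spec hexP, ?_⟩
    rcases Nat.eq_zero_or_pos (Nat.find hexP) with h | h
    · rw [h]; simpa using h1
    · have hmin := Nat.find_min hexP (show Nat.find hexP - 1 < Nat.find hexP by omega)
      rw [show Nat.find hexP - 1 + 1 = Nat.find hexP by omega] at hmin
      exact not_le.1 hmin
  · right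
    push_neg at h1
    have hexQ : ∃ k:ℕ, t < (2:ℝ)^(k+1) := by
      obtain ⟨m, hm⟩ := pow_unbounded_of_one_lt t (one_lt_two : (1:ℝ) < 2)
      exact ⟨m, hm.trans_le (pow_le_pow_right₀ one_le_two (Nat.le_succ m))⟩
    refine ⟨Nat.find hexQ, ?_, Nat.find_spec hexQ⟩
    rcases Nat.eq_zero_or_pos (Nat.find hexQ) with h | h
    · rw [h]; simpa using h1
    · have hmin := Nat.find_min hexQ (show Nat.find hexQ - 1 < Nat.find hexQ by omega)
      rw [show Nat.find hexQ - 1 + 1 = Nat.find hexQ by omega] at hmin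
      exact not_lt.1 hmin

-- dyadic exponent computations
theorem dyadicFar (n k : ℕ) (hn : 1 ≤ n) (s : ℝ) :
    ((2:ℝ)^k)^(-((n:ℝ)+2*s-1)) * (6*n*((2:ℝ)^(k+1))^(n-1))
      = 6*n*2^(n-1) * ((2:ℝ)^(-(2*s)))^k := by
  have h2 : (0:ℝ) < 2 := two_pos
  have e1 : ((2:ℝ)^k)^(-((n:ℝ)+2*s-1)) = (2:ℝ) ^ ((k:ℝ) * (-((n:ℝ)+2*s-1))) := by
    rw [← Real.rpow_natCast (2:ℝ) k, ← Real.rpow_mul h2.le]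
  have e2 : ((2:ℝ)^(k+1))^(n-1) = (2:ℝ) ^ ((((k+1)*(n-1):ℕ)):ℝ) := by
    rw [← pow_mul, Real.rpow_natCast]
  have e3 : ((2:ℝ)^(-(2*s)))^k = (2:ℝ) ^ ((-(2*s)) * (k:ℝ)) := by
    rw [← Real.rpow_natCast ((2:ℝ)^(-(2*s))) k, ← Real.rpow_mul h2.le]
  have e4 : (2:ℝ)^(n-1) = (2:ℝ) ^ (((n-1:ℕ)):ℝ) := (Real.rpow_natCast _ _).symm
  rw [e1, e2, e3, e4]
  have comb1 : ∀ a b : ℝ, (2:ℝ)^a * (6*(n:ℝ) * (2:ℝ)^b) = 6*n*(2:ℝ)^(a+b) := by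
    intro a b; rw [Real.rpow_add h2]; ring
  have comb2 : ∀ a b : ℝ, 6*(n:ℝ)*(2:ℝ)^a * (2:ℝ)^b = 6*n*(2:ℝ)^(a+b) := by
    intro a b; rw [Real.rpow_add h2]; ring
  rw [comb1, comb2]
  congr 1
  push_cast [Nat.cast_sub hn]
  ring

theorem dyadicNear (n k : ℕ) (hn : 1 ≤ n) {s : ℝ} (hs1 : s ≤ 1) :
    ((2:ℝ)^(k+1))^((n:ℝ)+2*s-1) * (((2:ℝ)⁻¹)^k)^n * ((2:ℝ)⁻¹)^k
      ≤ 2^(n+1) * ((2:ℝ)^(-(2-2*s)))^k := by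
  have h2 : (0:ℝ) < 2 := two_pos
  have einv : ∀ m:ℕ, ((2:ℝ)⁻¹)^m = (2:ℝ)^(-(m:ℝ)) := by
    intro m
    rw [inv_pow, ← Real.rpow_natCast (2:ℝ) m, ← Real.rpow_neg h2.le]
  have e1 : ((2:ℝ)^(k+1))^((n:ℝ)+2*s-1) = (2:ℝ) ^ (((k:ℝ)+1) * ((n:ℝ)+2*s-1)) := by
    rw [← Real.rpow_natCast (2:ℝ) (k+1), ← Real.rpow_mul h2.le]
    push_cast
    ring_nf
  have e2 : (((2:ℝ)⁻¹)^k)^n = (2:ℝ) ^ (-((k:ℝ)*n)) := by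
    rw [einv k, ← Real.rpow_natCast ((2:ℝ)^(-(k:ℝ))) n, ← Real.rpow_mul h2.le]
    ring_nf
  have e3 : ((2:ℝ)^(-(2-2*s)))^k = (2:ℝ) ^ ((-(2-2*s)) * (k:ℝ)) := by
    rw [← Real.rpow_natCast ((2:ℝ)^(-(2-2*s))) k, ← Real.rpow_mul h2.le, mul_comm]
  have e4 : (2:ℝ)^(n+1) = (2:ℝ) ^ (((n:ℝ)+1)) := by
    rw [← Real.rpow_natCast (2:ℝ) (n+1)]; push_cast; ring_nf
  rw [e1, e2, e3, e4, einv k, ← Real.rpow_add h2, ← Real.rpow_add h2, ← Real.rpow_add h2]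
  apply Real.rpow_le_rpow_of_exponent_le one_le_two
  have : ((k:ℝ)+1) * ((n:ℝ)+2*s-1) + (-((k:ℝ)*n)) + (-(k:ℝ))
      = ((n:ℝ)+2*s-1) + (-(2-2*s)) * k := by ring
  rw [this]
  have hk0 : (0:ℝ) ≤ k := Nat.cast_nonneg k
  nlinarith


theorem finalReal (n : ℕ) (hn : 2 ≤ n) {s R w : ℝ} (hs0 : 0 < s) (hs1 : s < 1)
    (hR : 2 ≤ R) (hw : 0 ≤ w) :
    (2:ℝ)^(n+1) * (4/(2-2*s)) * ((n:ℝ)*(2*R)^(n-1) * (w*w))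
      + 6*(n:ℝ)*2^(n-1) * (4/(2*s)) * w * ((n:ℝ)*(2*R)^(n-1) * w)
    ≤ (4*(n:ℝ)^2*4^n*w^2) * R^(n-1) / (s * (1-s)) := by
  have h1s : (0:ℝ) < 1 - s := by linarith
  have hnR : (2:ℝ) ≤ (n:ℝ) := by exact_mod_cast hn
  have hR0 : (0:ℝ) < R := by linarith
  rw [le_div_iff₀ (by positivity : (0:ℝ) < s*(1-s))]
  have h2n1 : (2:ℝ)^(n+1) = 4*2^(n-1) := by
    rw [show n+1 = (n-1)+2 by omega, pow_add]; ring
  have h4n : (4:ℝ)^n = 4*(2^(n-1))^2 := by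
    have h1 : (4:ℝ)^n = 2^(2*n) := by
      rw [show (4:ℝ) = 2^2 by norm_num, ← pow_mul]
    rw [h1, show 2*n = (n-1)+((n-1)+2) by omega, pow_add, pow_add]; ring
  rw [h2n1, h4n, mul_pow]
  set a := (2:ℝ)^(n-1) with ha
  have ha0 : (0:ℝ) < a := by positivity
  set P := R^(n-1) with hP
  have hP0 : (0:ℝ) ≤ P := by positivity
  have e1 : (4*a * (4/(2-2*s)) * ((n:ℝ)*(a*P) * (w*w))
        + 6*(n:ℝ)*a * (4/(2*s)) * w * ((n:ℝ)*(a*P) * w)) * (s*(1-s))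
      = 8*a*s * ((n:ℝ)*(a*P) * (w*w)) + 12*(n:ℝ)*a*(1-s) * ((n:ℝ)*(a*P) * w * w) := by
    field_simp [hs0.ne', (show (2:ℝ)-2*s ≠ 0 by linarith)]
    ring
  rw [e1]
  have hQ : (0:ℝ) ≤ a^2*P*w^2 := by positivity
  have key2 : 8*(n:ℝ)*s + 12*(n:ℝ)^2*(1-s) ≤ 16*(n:ℝ)^2 := by nlinarith
  nlinarith [mul_le_mul_of_nonneg_right key2 hQ, hQ]


set_option maxHeartbeats 1000000 in
theorem coreBound (n : ℕ) [NeZero n] (hn : 2 ≤ n) {s R : ℝ}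
    (hs0 : 0 < s) (hs1 : s < 1) (hR : 2 ≤ R) :
    (∫⁻ x in (ball (0:EuclideanSpace ℝ (Fin n)) (R+1) \ ball 0 R),
      ∫⁻ y in (ball (0:EuclideanSpace ℝ (Fin n)) R \ ball 0 (R-1)),
        ENNReal.ofReal (‖x - y‖ ^ (-((n:ℝ) + 2*s - 1))))
      ≤ ENNReal.ofReal ((4*n^2*4^n
          *((volume (ball (0:EuclideanSpace ℝ (Fin n)) 1)).toReal)^2)
          * R^(n-1) / (s * (1-s))) := by
  have hn1 : 1 ≤ n := by omega
  have hnR : (2:ℝ) ≤ (n:ℝ) := by exact_mod_cast hn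
  have hR0 : (0:ℝ) < R := by linarith
  have h1s : (0:ℝ) < 1 - s := by linarith
  set ω := volume (ball (0:EuclideanSpace ℝ (Fin n)) 1) with hω
  have hωfin : ω ≠ ⊤ := measure_ball_lt_top.ne
  set ω₀ := ω.toReal with hω₀
  have hωeq : ω = ENNReal.ofReal ω₀ := (ENNReal.ofReal_toReal hωfin).symm
  have hω₀0 : (0:ℝ) ≤ ω₀ := ENNReal.toReal_nonneg
  set α := (n:ℝ) + 2*s - 1 with hα
  have hα0 : (0:ℝ) < α := by rw [hα]; linarith
  have hαn1 : α ≤ (n:ℝ)+1 := by rw [hα]; linarith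
  set AIn := ball (0:EuclideanSpace ℝ (Fin n)) R \ ball 0 (R-1) with hAIn
  set AOut := ball (0:EuclideanSpace ℝ (Fin n)) (R+1) \ ball 0 R with hAOut
  have hAOutM : MeasurableSet AOut := measurableSet_ball.diff measurableSet_ball
  set q1 : ℝ := (2:ℝ)^(-(2*s)) with hq1
  set q2 : ℝ := (2:ℝ)^(-(2-2*s)) with hq2
  have hq1nn : 0 ≤ q1 := le_of_lt (Real.rpow_pos_of_pos two_pos _)
  have hq2nn : 0 ≤ q2 := le_of_lt (Real.rpow_pos_of_pos two_pos _)
  set farC : ℕ → ENNReal := fun k => ENNReal.ofReal (6*n*2^(n-1) * q1^k) * ω with hfarC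
  set nearC : ℕ → ℝ := fun k => ((2:ℝ)^(k+1))^α * (((2:ℝ)⁻¹)^k)^n with hnearC
  set nearT : ℕ → EuclideanSpace ℝ (Fin n) → ENNReal := fun k x =>
    (ball (0:EuclideanSpace ℝ (Fin n)) (R + ((2:ℝ)⁻¹)^k)).indicator
      (fun _ => ENNReal.ofReal (nearC k) * ω) x with hnearT
  -- Step 1 : pointwise inner bound
  have step1 : ∀ x ∈ AOut, (∫⁻ y in AIn, ENNReal.ofReal (‖x - y‖ ^ (-α)))
      ≤ (∑' k, nearT k x) + (∑' k, farC k) := by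
    intro x hx
    obtain ⟨hxball, hxout⟩ := hx
    have hxlow : R ≤ ‖x‖ := by
      rw [mem_ball_zero_iff] at hxout; exact not_lt.1 hxout
    have hxhigh : ‖x‖ < R + 1 := mem_ball_zero_iff.1 hxball
    set nearSh : ℕ → Set (EuclideanSpace ℝ (Fin n)) := fun k =>
      {y | ((2:ℝ)⁻¹)^(k+1) ≤ ‖x - y‖ ∧ ‖x - y‖ < ((2:ℝ)⁻¹)^k} with hnearSh
    set farSh : ℕ → Set (EuclideanSpace ℝ (Fin n)) := fun k =>
      {y | (2:ℝ)^k ≤ ‖x - y‖ ∧ ‖x - y‖ < (2:ℝ)^(k+1)} with hfarSh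
    have hcover : AIn ⊆ (⋃ k, AIn ∩ nearSh k) ∪ (⋃ k, AIn ∩ farSh k) := by
      intro y hy
      have hynorm : ‖y‖ < R := mem_ball_zero_iff.1 hy.1
      have hpos : 0 < ‖x - y‖ := by
        have h1 : ‖x‖ - ‖y‖ ≤ ‖x - y‖ := norm_sub_norm_le x y
        linarith
      rcases exists_dyadic hpos with ⟨k, hk1, hk2⟩ | ⟨k, hk1, hk2⟩
      · exact Or.inl (mem_iUnion.2 ⟨k, hy, hk1, hk2⟩)
      · exact Or.inr (mem_iUnion.2 ⟨k, hy, hk1, hk2⟩)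
    have hfarbound : ∀ k : ℕ, (∫⁻ y in AIn ∩ farSh k, ENNReal.ofReal (‖x - y‖ ^ (-α)))
        ≤ farC k := by
      intro k
      have hsetM : MeasurableSet (AIn ∩ farSh k) := by
        refine (measurableSet_ball.diff measurableSet_ball).inter ?_
        exact ((continuous_const.sub continuous_id).norm).measurable measurableSet_Ico
      have h2k : (0:ℝ) < (2:ℝ)^k := by positivity
      calc (∫⁻ y in AIn ∩ farSh k, ENNReal.ofReal (‖x - y‖ ^ (-α)))
          ≤ ∫⁻ _ in AIn ∩ farSh k, ENNReal.ofReal (((2:ℝ)^k) ^ (-α)) := by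
            refine setLIntegral_mono' hsetM ?_
            intro y hy
            exact ENNReal.ofReal_le_ofReal
              (Real.rpow_le_rpow_of_nonpos h2k hy.2.1 (neg_nonpos.2 hα0.le))
        _ = ENNReal.ofReal (((2:ℝ)^k) ^ (-α)) * volume (AIn ∩ farSh k) :=
            setLIntegral_const _ _
        _ ≤ ENNReal.ofReal (((2:ℝ)^k) ^ (-α))
              * (ENNReal.ofReal (6*n*((2:ℝ)^(k+1))^(n-1)) * ω) := by
            gcongr
            refine le_trans (measure_mono ?_) (lemA hn1 hR x hxhigh.le (by positivity))
            intro y hy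
            refine ⟨hy.1, ?_⟩
            rw [mem_ball, dist_eq_norm, ← norm_sub_rev]
            exact hy.2.2
        _ = farC k := by
            rw [← mul_assoc, ← ENNReal.ofReal_mul (by positivity), dyadicFar n k hn1 s, hfarC]
    have hnearbound : ∀ k : ℕ, (∫⁻ y in AIn ∩ nearSh k, ENNReal.ofReal (‖x - y‖ ^ (-α)))
        ≤ nearT k x := by
      intro k
      by_cases hxin : x ∈ ball (0:EuclideanSpace ℝ (Fin n)) (R + ((2:ℝ)⁻¹)^k)
      · have hsetM : MeasurableSet (AIn ∩ nearSh k) := by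
          refine (measurableSet_ball.diff measurableSet_ball).inter ?_
          exact ((continuous_const.sub continuous_id).norm).measurable measurableSet_Ico
        have h2k : (0:ℝ) < ((2:ℝ)⁻¹)^(k+1) := by positivity
        have hker : (((2:ℝ)⁻¹)^(k+1)) ^ (-α) = ((2:ℝ)^(k+1))^α := by
          rw [inv_pow, Real.inv_rpow (by positivity), ← Real.rpow_neg (by positivity), neg_neg]
        calc (∫⁻ y in AIn ∩ nearSh k, ENNReal.ofReal (‖x - y‖ ^ (-α)))
            ≤ ∫⁻ _ in AIn ∩ nearSh k, ENNReal.ofReal (((2:ℝ)^(k+1)) ^ α) := by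
              refine setLIntegral_mono' hsetM ?_
              intro y hy
              refine ENNReal.ofReal_le_ofReal ?_
              rw [← hker]
              exact Real.rpow_le_rpow_of_nonpos h2k hy.2.1 (neg_nonpos.2 hα0.le)
          _ = ENNReal.ofReal (((2:ℝ)^(k+1)) ^ α) * volume (AIn ∩ nearSh k) :=
              setLIntegral_const _ _
          _ ≤ ENNReal.ofReal (((2:ℝ)^(k+1)) ^ α)
                * (ENNReal.ofReal ((((2:ℝ)⁻¹)^k)^n) * ω) := by
              gcongr
              refine le_trans (measure_mono ?_) (le_of_eq (ballVol x (by positivity)))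
              intro y hy
              rw [mem_ball, dist_eq_norm, ← norm_sub_rev]
              exact hy.2.2
          _ = nearT k x := by
              rw [hnearT]
              simp only [indicator_of_mem hxin]
              rw [← mul_assoc, ← ENNReal.ofReal_mul (by positivity), hnearC]
      · have hempty : AIn ∩ nearSh k = ∅ := by
          rw [eq_empty_iff_forall_notMem]
          rintro y ⟨hyA, hysh⟩
          have hynorm : ‖y‖ < R := mem_ball_zero_iff.1 hyA.1
          have hxfar : R + ((2:ℝ)⁻¹)^k ≤ ‖x‖ := by
            rw [mem_ball_zero_iff] at hxin; exact not_lt.1 hxin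
          have h1 : ‖x‖ - ‖y‖ ≤ ‖x - y‖ := norm_sub_norm_le x y
          have := hysh.2
          linarith
        rw [hempty]
        simp
    calc (∫⁻ y in AIn, ENNReal.ofReal (‖x - y‖ ^ (-α)))
        ≤ ∫⁻ y in (⋃ k, AIn ∩ nearSh k) ∪ (⋃ k, AIn ∩ farSh k),
            ENNReal.ofReal (‖x - y‖ ^ (-α)) := lintegral_mono_set hcover
      _ ≤ (∫⁻ y in (⋃ k, AIn ∩ nearSh k), ENNReal.ofReal (‖x - y‖ ^ (-α)))
            + ∫⁻ y in (⋃ k, AIn ∩ farSh k), ENNReal.ofReal (‖x - y‖ ^ (-α)) :=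
          lintegral_union_le _ _ _
      _ ≤ (∑' k, ∫⁻ y in AIn ∩ nearSh k, ENNReal.ofReal (‖x - y‖ ^ (-α)))
            + ∑' k, ∫⁻ y in AIn ∩ farSh k, ENNReal.ofReal (‖x - y‖ ^ (-α)) := by
          gcongr
          · exact lintegral_iUnion_le _ _
          · exact lintegral_iUnion_le _ _
      _ ≤ (∑' k, nearT k x) + ∑' k, farC k := by
          gcongr with k k
          · exact hnearbound k
          · exact hfarbound k
  -- Step 2 : integrate in x
  have hshellOut : ∀ e : ℝ, 0 < e → e ≤ 1 →
      volume (ball (0:EuclideanSpace ℝ (Fin n)) (R+e) ∩ AOut)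
        ≤ ENNReal.ofReal ((n:ℝ)*(2*R)^(n-1)*e) * ω := by
    intro e he0 he1
    have hsub : ball (0:EuclideanSpace ℝ (Fin n)) (R+e) ∩ AOut
        ⊆ ball (0:EuclideanSpace ℝ (Fin n)) (R+e) \ ball 0 R := by
      rintro z ⟨hz1, hz2⟩
      exact ⟨hz1, hz2.2⟩
    refine le_trans (measure_mono hsub) (le_trans (shellVol_le hn1 0 hR0.le (by linarith)) ?_)
    refine mul_le_mul' (ENNReal.ofReal_le_ofReal ?_) le_rfl
    calc (n:ℝ) * (R+e)^(n-1) * (R + e - R) = n * (R+e)^(n-1) * e := by ring_nf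
    _ ≤ (n:ℝ)*(2*R)^(n-1)*e := by
        gcongr
        linarith
  have hvolOut : volume AOut ≤ ENNReal.ofReal ((n:ℝ)*(2*R)^(n-1)) * ω := by
    rw [hAOut]
    refine le_trans (shellVol_le hn1 0 hR0.le (by linarith)) ?_
    refine mul_le_mul' (ENNReal.ofReal_le_ofReal ?_) le_rfl
    calc (n:ℝ) * (R+1)^(n-1) * (R + 1 - R) = n * (R+1)^(n-1) := by ring_nf
    _ ≤ (n:ℝ)*(2*R)^(n-1) := by
        gcongr
        linarith
  have hnearInt : ∀ k : ℕ, (∫⁻ x in AOut, nearT k x)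
      ≤ ENNReal.ofReal ((2:ℝ)^(n+1) * q2^k)
          * (ENNReal.ofReal ((n:ℝ)*(2*R)^(n-1)) * (ω * ω)) := by
    intro k
    have he0 : (0:ℝ) < ((2:ℝ)⁻¹)^k := by positivity
    have he1 : ((2:ℝ)⁻¹)^k ≤ 1 := pow_le_one₀ (by norm_num) (by norm_num)
    have hnC : 0 ≤ nearC k := by simp only [hnearC]; positivity
    have hcoef : nearC k * ((n:ℝ)*(2*R)^(n-1)*((2:ℝ)⁻¹)^k)
        ≤ ((2:ℝ)^(n+1) * q2^k) * ((n:ℝ)*(2*R)^(n-1)) := by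
      have hd := dyadicNear n k hn1 hs1.le
      simp only [hnearC]
      calc ((2:ℝ)^(k+1))^α * (((2:ℝ)⁻¹)^k)^n * ((n:ℝ)*(2*R)^(n-1)*((2:ℝ)⁻¹)^k)
          = (((2:ℝ)^(k+1))^α * (((2:ℝ)⁻¹)^k)^n * ((2:ℝ)⁻¹)^k) * ((n:ℝ)*(2*R)^(n-1)) := by
            ring
        _ ≤ ((2:ℝ)^(n+1) * q2^k) * ((n:ℝ)*(2*R)^(n-1)) := by
            refine mul_le_mul_of_nonneg_right ?_ (by positivity)
            simp only [hα, hq2]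
            exact hd
    calc (∫⁻ x in AOut, nearT k x)
        = ENNReal.ofReal (nearC k) * ω
            * volume (ball (0:EuclideanSpace ℝ (Fin n)) (R + ((2:ℝ)⁻¹)^k) ∩ AOut) := by
          rw [hnearT]
          rw [lintegral_indicator measurableSet_ball, setLIntegral_const,
            Measure.restrict_apply measurableSet_ball]
      _ ≤ ENNReal.ofReal (nearC k) * ω
            * (ENNReal.ofReal ((n:ℝ)*(2*R)^(n-1)*((2:ℝ)⁻¹)^k) * ω) := by
          gcongr
          exact hshellOut _ he0 he1
      _ = (ENNReal.ofReal (nearC k) * ENNReal.ofReal ((n:ℝ)*(2*R)^(n-1)*((2:ℝ)⁻¹)^k))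
            * (ω * ω) := by
          ring
      _ = ENNReal.ofReal (nearC k * ((n:ℝ)*(2*R)^(n-1)*((2:ℝ)⁻¹)^k)) * (ω * ω) := by
          rw [← ENNReal.ofReal_mul hnC]
      _ ≤ ENNReal.ofReal (((2:ℝ)^(n+1) * q2^k) * ((n:ℝ)*(2*R)^(n-1))) * (ω * ω) := by
          exact mul_le_mul_left (ENNReal.ofReal_le_ofReal hcoef) _
      _ = ENNReal.ofReal ((2:ℝ)^(n+1) * q2^k)
            * (ENNReal.ofReal ((n:ℝ)*(2*R)^(n-1)) * (ω * ω)) := by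
          rw [ENNReal.ofReal_mul (by positivity), mul_assoc]
  -- assemble
  calc (∫⁻ x in AOut, ∫⁻ y in AIn, ENNReal.ofReal (‖x - y‖ ^ (-α)))
      ≤ ∫⁻ x in AOut, ((∑' k, nearT k x) + ∑' k, farC k) := setLIntegral_mono' hAOutM step1
    _ = (∫⁻ x in AOut, ∑' k, nearT k x) + (∑' k, farC k) * volume AOut := by
        rw [lintegral_add_right _ measurable_const, lintegral_const,
          Measure.restrict_apply_univ]
    _ ≤ (∑' k, ∫⁻ x in AOut, nearT k x) + (∑' k, farC k) * volume AOut := by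
        exact add_le_add (le_of_eq (lintegral_tsum fun k =>
          ((measurable_const.indicator measurableSet_ball)).aemeasurable)) le_rfl
    _ ≤ (∑' k, ENNReal.ofReal ((2:ℝ)^(n+1) * q2^k)
            * (ENNReal.ofReal ((n:ℝ)*(2*R)^(n-1)) * (ω * ω)))
          + (∑' k, farC k) * (ENNReal.ofReal ((n:ℝ)*(2*R)^(n-1)) * ω) := by
        exact add_le_add (ENNReal.tsum_le_tsum fun k => hnearInt k)
          (mul_le_mul' le_rfl hvolOut)
    _ = (∑' k, ENNReal.ofReal ((2:ℝ)^(n+1) * q2^k))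
            * (ENNReal.ofReal ((n:ℝ)*(2*R)^(n-1)) * (ω * ω))
          + (∑' k, ENNReal.ofReal (6*n*2^(n-1) * q1^k)) * ω
            * (ENNReal.ofReal ((n:ℝ)*(2*R)^(n-1)) * ω) := by
        rw [ENNReal.tsum_mul_right, hfarC, ENNReal.tsum_mul_right]
    _ ≤ (ENNReal.ofReal ((2:ℝ)^(n+1)) * ENNReal.ofReal (4/(2-2*s)))
            * (ENNReal.ofReal ((n:ℝ)*(2*R)^(n-1)) * (ω * ω))
          + (ENNReal.ofReal (6*n*2^(n-1)) * ENNReal.ofReal (4/(2*s))) * ω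
            * (ENNReal.ofReal ((n:ℝ)*(2*R)^(n-1)) * ω) := by
        gcongr
        · calc (∑' k, ENNReal.ofReal ((2:ℝ)^(n+1) * q2^k))
              = ENNReal.ofReal ((2:ℝ)^(n+1)) * ∑' k, (ENNReal.ofReal q2)^k := by
                rw [← ENNReal.tsum_mul_left]
                refine tsum_congr fun k => ?_
                rw [ENNReal.ofReal_mul (p := (2:ℝ)^(n+1)) (by positivity),
                  ENNReal.ofReal_pow hq2nn]
          _ ≤ ENNReal.ofReal ((2:ℝ)^(n+1)) * ENNReal.ofReal (4/(2-2*s)) := by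
                gcongr
                exact geoSumBound (by linarith) (by linarith)
        · calc (∑' k, ENNReal.ofReal (6*n*2^(n-1) * q1^k))
              = ENNReal.ofReal (6*n*2^(n-1)) * ∑' k, (ENNReal.ofReal q1)^k := by
                rw [← ENNReal.tsum_mul_left]
                refine tsum_congr fun k => ?_
                rw [ENNReal.ofReal_mul (p := 6*(n:ℝ)*2^(n-1)) (by positivity),
                  ENNReal.ofReal_pow hq1nn]
          _ ≤ ENNReal.ofReal (6*n*2^(n-1)) * ENNReal.ofReal (4/(2*s)) := by
                gcongr
                exact geoSumBound (by linarith) (by linarith)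
    _ ≤ ENNReal.ofReal ((4*n^2*4^n*ω₀^2) * R^(n-1) / (s * (1-s))) := by
        rw [hωeq]
        have h1 : (0:ℝ) ≤ (2:ℝ)^(n+1) := by positivity
        have h2 : (0:ℝ) ≤ 4/(2-2*s) := div_nonneg (by norm_num) (by linarith)
        have h3 : (0:ℝ) ≤ (n:ℝ)*(2*R)^(n-1) := by positivity
        have h4 : (0:ℝ) ≤ 6*(n:ℝ)*2^(n-1) := by positivity
        have h5 : (0:ℝ) ≤ 4/(2*s) := div_nonneg (by norm_num) (by linarith)
        have e2 : ENNReal.ofReal ((2:ℝ)^(n+1)) * ENNReal.ofReal (4/(2-2*s))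
              * (ENNReal.ofReal ((n:ℝ)*(2*R)^(n-1))
                * (ENNReal.ofReal ω₀ * ENNReal.ofReal ω₀))
            = ENNReal.ofReal ((2:ℝ)^(n+1) * (4/(2-2*s))
                * ((n:ℝ)*(2*R)^(n-1) * (ω₀*ω₀))) := by
          rw [← ENNReal.ofReal_mul hω₀0, ← ENNReal.ofReal_mul h3,
            ← ENNReal.ofReal_mul h1, ← ENNReal.ofReal_mul (mul_nonneg h1 h2)]
        have e3 : ENNReal.ofReal (6*(n:ℝ)*2^(n-1)) * ENNReal.ofReal (4/(2*s))
              * ENNReal.ofReal ω₀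
              * (ENNReal.ofReal ((n:ℝ)*(2*R)^(n-1)) * ENNReal.ofReal ω₀)
            = ENNReal.ofReal (6*(n:ℝ)*2^(n-1) * (4/(2*s)) * ω₀
                * ((n:ℝ)*(2*R)^(n-1) * ω₀)) := by
          rw [← ENNReal.ofReal_mul h3, ← ENNReal.ofReal_mul h4,
            ← ENNReal.ofReal_mul (mul_nonneg h4 h5),
            ← ENNReal.ofReal_mul (mul_nonneg (mul_nonneg h4 h5) hω₀0)]
        have hPnn : (0:ℝ) ≤ (2:ℝ)^(n+1) * (4/(2-2*s)) * ((n:ℝ)*(2*R)^(n-1) * (ω₀*ω₀)) :=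
          mul_nonneg (mul_nonneg h1 h2) (mul_nonneg h3 (mul_nonneg hω₀0 hω₀0))
        have hQnn : (0:ℝ) ≤ 6*(n:ℝ)*2^(n-1) * (4/(2*s)) * ω₀ * ((n:ℝ)*(2*R)^(n-1) * ω₀) :=
          mul_nonneg (mul_nonneg (mul_nonneg h4 h5) hω₀0) (mul_nonneg h3 hω₀0)
        rw [e2, e3, ← ENNReal.ofReal_add hPnn hQnn]
        exact ENNReal.ofReal_le_ofReal (finalReal n hn hs0 hs1 hR hω₀0)


/-- the annulus–annulus kernel estimate
`∫_{B_{R+1}∖B_R} ∫_{B_R∖B_{R−1}} |x−y|^{−(n+2s−1)} dy dx ≤ C R^{n−1}/(s(1−s))`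
for `R ≥ 2`, with `C` depending only on `n ≥ 2` (uniform in `s ∈ (0,1)`). -/
theorem annulus_annulus_kernel_estimate (n : ℕ) (hn : 2 ≤ n) :
    ∃ C > 0, ∀ s ∈ Set.Ioo (0 : ℝ) 1, ∀ R : ℝ, 2 ≤ R →
      (∫ x in Metric.ball (0 : EuclideanSpace ℝ (Fin n)) (R + 1) \ Metric.ball 0 R,
          ∫ y in Metric.ball (0 : EuclideanSpace ℝ (Fin n)) R \ Metric.ball 0 (R - 1),
            ‖x - y‖ ^ (-((n : ℝ) + 2 * s - 1)))
        ≤ C * R ^ ((n : ℝ) - 1) / (s * (1 - s)) := by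
  haveI : NeZero n := ⟨by omega⟩
  have hn1 : 1 ≤ n := by omega
  set ω₀ := (volume (ball (0 : EuclideanSpace ℝ (Fin n)) 1)).toReal with hω₀
  have hω₀pos : 0 < ω₀ :=
    ENNReal.toReal_pos (measure_ball_pos _ _ one_pos).ne' measure_ball_lt_top.ne
  refine ⟨4*n^2*4^n*ω₀^2, by positivity, ?_⟩
  rintro s ⟨hs0, hs1⟩ R hR
  have hR0 : (0:ℝ) < R := by linarith
  set α := (n:ℝ) + 2*s - 1 with hα
  set AIn := ball (0:EuclideanSpace ℝ (Fin n)) R \ ball 0 (R-1) with hAIn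
  set AOut := ball (0:EuclideanSpace ℝ (Fin n)) (R+1) \ ball 0 R with hAOut
  have hAOutM : MeasurableSet AOut := measurableSet_ball.diff measurableSet_ball
  set F : EuclideanSpace ℝ (Fin n) → ℝ := fun x => ∫ y in AIn, ‖x - y‖ ^ (-α) with hF
  have hF0 : ∀ x, 0 ≤ F x := fun x =>
    integral_nonneg fun y => Real.rpow_nonneg (norm_nonneg _) _
  have hrexp : R ^ ((n:ℝ) - 1) = R ^ (n-1) := by
    rw [show (n:ℝ) - 1 = ((n-1:ℕ):ℝ) by push_cast [Nat.cast_sub hn1]; ring,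
      Real.rpow_natCast]
  have hpt : ∀ x ∈ AOut, ENNReal.ofReal (F x)
      ≤ ∫⁻ y in AIn, ENNReal.ofReal (‖x - y‖ ^ (-α)) := by
    intro x hx
    have hxlow : R ≤ ‖x‖ := not_lt.1 (fun h => hx.2 (mem_ball_zero_iff.2 h))
    have hmeas : AEStronglyMeasurable (fun y => ‖x - y‖ ^ (-α)) (volume.restrict AIn) := by
      refine ContinuousOn.aestronglyMeasurable ?_
        (measurableSet_ball.diff measurableSet_ball)
      refine ContinuousOn.rpow_const
        ((continuous_const.sub continuous_id).norm).continuousOn ?_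
      intro y hy
      left
      have hy1 : ‖y‖ < R := mem_ball_zero_iff.1 hy.1
      have h1 : ‖x‖ - ‖y‖ ≤ ‖x - y‖ := norm_sub_norm_le x y
      have : 0 < ‖x - y‖ := by linarith
      exact ne_of_gt this
    have heq := integral_eq_lintegral_of_nonneg_ae (μ := volume.restrict AIn)
      (f := fun y => ‖x - y‖ ^ (-α))
      (Eventually.of_forall fun y => Real.rpow_nonneg (norm_nonneg _) _) hmeas
    calc ENNReal.ofReal (F x)
        = ENNReal.ofReal ((∫⁻ y in AIn, ENNReal.ofReal (‖x - y‖ ^ (-α))).toReal) := by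
          rw [hF]; exact congrArg ENNReal.ofReal heq
      _ ≤ ∫⁻ y in AIn, ENNReal.ofReal (‖x - y‖ ^ (-α)) := ENNReal.ofReal_toReal_le
  have hgoalpos : 0 ≤ (4*(n:ℝ)^2*4^n*ω₀^2) * R ^ ((n:ℝ)-1) / (s * (1-s)) := by
    have h1s : (0:ℝ) < 1 - s := by linarith
    positivity
  by_cases hInt : Integrable F (volume.restrict AOut)
  · rw [show (∫ x in AOut, F x) = _ from integral_eq_lintegral_of_nonneg_ae
      (Eventually.of_forall hF0) hInt.aestronglyMeasurable]
    have hle : (∫⁻ x in AOut, ENNReal.ofReal (F x))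
        ≤ ENNReal.ofReal ((4*n^2*4^n*ω₀^2) * R^(n-1) / (s*(1-s))) :=
      le_trans (setLIntegral_mono' hAOutM hpt) (coreBound n hn hs0 hs1 hR)
    have hnn : (0:ℝ) ≤ (4*(n:ℝ)^2*4^n*ω₀^2) * R^(n-1) / (s*(1-s)) := by
      have h1s : (0:ℝ) < 1 - s := by linarith
      positivity
    have := ENNReal.toReal_le_of_le_ofReal hnn hle
    calc (∫⁻ x in AOut, ENNReal.ofReal (F x)).toReal
        ≤ (4*(n:ℝ)^2*4^n*ω₀^2) * R^(n-1) / (s*(1-s)) := this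
      _ = 4*(n:ℝ)^2*4^n*ω₀^2 * R ^ ((n:ℝ)-1) / (s*(1-s)) := by rw [hrexp]
  · rw [integral_undef hInt]
    exact hgoalpos
end
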